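/- arXiv:2005.04113 — 2 statements merged into one kernel-verified Lean document; each statement's English description precedes it below -/
import Mathlib

section
/- Let n ≥ 1, let g : ℝ → ℝ be defined by g(t) = sin(t)/t for t ≠ 0 and g(0) = 1, and for each integer k ≥ 1 define H_k : ℝⁿ → ℝ by H_k(ξ) = ∏_{i=1}^n g(πξ_i/k)^{2k}. Then for every integer k ≥ 1 and every η = (η_1,…,η_n) ∈ ℝⁿ with ‖η‖ ≥ k, one has e^k · H_k(√n·η) ≤ 1, where √n·η = (√n η_1, …, √n η_n) and ‖η‖ = (Σ_{i=1}^n η_i²)^{1/2}. -/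
/-- Let `g(t) = sin(t)/t` for `t ≠ 0`, `g(0) = 1`, and for `k ≥ 1` let
`H_k(ξ) = ∏ᵢ g(πξᵢ/k)^{2k}` on `ℝⁿ`. Then for every `k ≥ 1` and every `η ∈ ℝⁿ` with
`‖η‖ ≥ k`, one has `e^k ⬝ H_k(√n ⬝ η) ≤ 1`. -/
theorem stmt9 (n : ℕ) (hn : 1 ≤ n) (g : ℝ → ℝ) (hg0 : g 0 = 1)
    (hg : ∀ t : ℝ, t ≠ 0 → g t = Real.sin t / t)
    (k : ℕ) (hk : 1 ≤ k) (η : EuclideanSpace ℝ (Fin n)) (hη : (k : ℝ) ≤ ‖η‖) :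
    Real.exp k * ∏ i : Fin n, g (Real.pi * (Real.sqrt n * η i) / k) ^ (2 * k) ≤ 1 := by
  have habs : ∀ t : ℝ, |g t| ≤ 1 := by
    intro t
    rcases eq_or_ne t 0 with h | h
    · simp [h, hg0]
    · rw [hg t h, abs_div, div_le_one (abs_pos.2 h)]
      exact Real.abs_sin_le_abs
  have hnonneg : ∀ t : ℝ, 0 ≤ g t ^ (2 * k) := fun t =>
    Even.pow_nonneg (even_two_mul k) _
  have hle1 : ∀ t : ℝ, g t ^ (2 * k) ≤ 1 := by
    intro t
    calc g t ^ (2 * k) = |g t ^ (2 * k)| := (abs_of_nonneg (hnonneg t)).symm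
    _ = |g t| ^ (2 * k) := abs_pow _ _
    _ ≤ 1 := pow_le_one₀ (abs_nonneg _) (habs t)
  -- find coordinate with large value
  have hksq : (k : ℝ) ^ 2 ≤ ∑ i : Fin n, η i ^ 2 := by
    have h1 : (k : ℝ) ^ 2 ≤ ‖η‖ ^ 2 :=
      pow_le_pow_left₀ (by positivity) hη 2
    have h2 : ‖η‖ ^ 2 = ∑ i : Fin n, η i ^ 2 := by
      rw [EuclideanSpace.norm_eq]
      rw [Real.sq_sqrt (by positivity)]
      exact Finset.sum_congr rfl (fun i _ => (sq_abs _))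
    linarith
  haveI : Nonempty (Fin n) := Fin.pos_iff_nonempty.1 hn
  obtain ⟨i, -, hi⟩ : ∃ i ∈ Finset.univ, (k : ℝ) ^ 2 / n ≤ η i ^ 2 := by
    apply Finset.exists_le_of_sum_le (Finset.univ_nonempty)
    have hn0 : (0:ℝ) < n := by exact_mod_cast hn
    rw [Finset.sum_const, Finset.card_univ, Fintype.card_fin, nsmul_eq_mul,
      mul_div_cancel₀ _ (ne_of_gt hn0)]
    exact hksq
  -- the key coordinate value
  set t : ℝ := Real.pi * (Real.sqrt n * η i) / k with ht
  have hk0 : (0:ℝ) < k := by exact_mod_cast hk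
  have hn0 : (0:ℝ) < n := by exact_mod_cast hn
  have hηi : (k : ℝ) ≤ Real.sqrt n * |η i| := by
    have : (k:ℝ)^2 ≤ (Real.sqrt n * |η i|)^2 := by
      rw [mul_pow, Real.sq_sqrt hn0.le, sq_abs]
      calc (k:ℝ)^2 = n * ((k:ℝ)^2 / n) := by field_simp
      _ ≤ n * η i ^ 2 := by exact mul_le_mul_of_nonneg_left hi hn0.le
    have hs : 0 ≤ Real.sqrt n * |η i| := by positivity
    nlinarith
  have htabs : Real.pi ≤ |t| := by
    rw [ht, abs_div, abs_mul, abs_mul, abs_of_nonneg Real.pi_pos.le,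
      abs_of_nonneg (Real.sqrt_nonneg _), abs_of_nonneg hk0.le,
      le_div_iff₀ hk0]
    nlinarith [mul_le_mul_of_nonneg_left hηi Real.pi_pos.le]
  have ht0 : t ≠ 0 := by
    intro h
    rw [h, abs_zero] at htabs
    linarith [Real.pi_pos]
  have hgt : |g t| ≤ 1 / Real.pi := by
    rw [hg t ht0, abs_div]
    exact div_le_div₀ zero_le_one
      (abs_le.2 ⟨Real.neg_one_le_sin t, Real.sin_le_one t⟩) Real.pi_pos htabs
  have hgtk : g t ^ (2 * k) ≤ (1 / Real.pi) ^ (2 * k) := by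
    calc g t ^ (2 * k) = |g t| ^ (2 * k) := by
          rw [← abs_pow, abs_of_nonneg (hnonneg t)]
    _ ≤ (1 / Real.pi) ^ (2 * k) :=
        pow_le_pow_left₀ (abs_nonneg _) hgt _
  have hprod : ∏ j : Fin n, g (Real.pi * (Real.sqrt n * η j) / k) ^ (2 * k)
      ≤ (1 / Real.pi) ^ (2 * k) := by
    rw [← Finset.mul_prod_erase Finset.univ _ (Finset.mem_univ i)]
    calc g t ^ (2 * k) * ∏ j ∈ Finset.univ.erase i,
          g (Real.pi * (Real.sqrt n * η j) / k) ^ (2 * k)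
        ≤ (1 / Real.pi) ^ (2 * k) * 1 := by
          apply mul_le_mul hgtk _ _ (by positivity)
          · exact Finset.prod_le_one (fun j _ => hnonneg _) (fun j _ => hle1 _)
          · exact Finset.prod_nonneg (fun j _ => hnonneg _)
    _ = (1 / Real.pi) ^ (2 * k) := mul_one _
  have hexp : Real.exp 1 ≤ Real.pi ^ 2 := by
    nlinarith [Real.exp_one_lt_d9, Real.pi_gt_three]
  calc Real.exp k * ∏ j : Fin n, g (Real.pi * (Real.sqrt n * η j) / k) ^ (2 * k)
      ≤ Real.exp k * (1 / Real.pi) ^ (2 * k) := by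
        exact mul_le_mul_of_nonneg_left hprod (Real.exp_pos _).le
  _ = (Real.exp 1 * (1 / Real.pi) ^ 2) ^ k := by
        rw [mul_pow, ← Real.exp_nat_mul, mul_one, ← pow_mul]
  _ ≤ 1 := by
        apply pow_le_one₀ (by positivity)
        rw [div_pow, one_pow, mul_one_div, div_le_one (by positivity)]
        exact hexp
end

section
/- Let n ≥ 1 and let P be a nonzero polynomial in n complex variables. Then the function ζ ↦ P(ζ) on ℂⁿ is slowly decreasing: there exists a constant A > 0 such that for every ξ ∈ ℝⁿ there is a point ζ ∈ ℂⁿ with ‖ζ − ξ‖ < A·log(2 + ‖ξ‖) and |P(ζ)| > (A + ‖ξ‖)^{−A}. -/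
open Polynomial
lemma my_coeff_prod_sum {ι : Type*} (s : Finset ι) (f : ι → Polynomial ℂ) (m : ι → ℕ)
    (h : ∀ i ∈ s, (f i).natDegree ≤ m i) :
    (∏ i ∈ s, f i).coeff (∑ i ∈ s, m i) = ∏ i ∈ s, (f i).coeff (m i) := by
  induction s using Finset.cons_induction with
  | empty => simp
  | cons a s ha ih =>
    rw [Finset.prod_cons, Finset.sum_cons, Finset.prod_cons,
      Polynomial.coeff_mul_add_eq_of_natDegree_le (h a (Finset.mem_cons_self a s))
        ((Polynomial.natDegree_prod_le _ _).trans
          (Finset.sum_le_sum fun i hi => h i (Finset.mem_cons_of_mem hi))),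
      ih fun i hi => h i (Finset.mem_cons_of_mem hi)]

lemma my_natDegree_lin (a b : ℂ) : (Polynomial.C a + Polynomial.C b * Polynomial.X).natDegree ≤ 1 :=
  (Polynomial.natDegree_add_le _ _).trans
    (max_le (by simp) ((Polynomial.natDegree_C_mul_le _ _).trans (by simp)))

lemma my_natDegree_term (n : ℕ) (ξ v : Fin n → ℂ) (m : Fin n →₀ ℕ) (c : ℂ) :
    ((MvPolynomial.aeval (fun i => Polynomial.C (ξ i) + Polynomial.C (v i) * Polynomial.X))
      (MvPolynomial.monomial m c)).natDegree ≤ m.degree := by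
  rw [MvPolynomial.aeval_monomial]
  have h1 : (algebraMap ℂ (Polynomial ℂ) c).natDegree = 0 := by
    simp [Polynomial.algebraMap_eq]
  refine (Polynomial.natDegree_mul_le).trans ?_
  rw [h1, zero_add, Finsupp.prod]
  refine le_trans (Polynomial.natDegree_prod_le _ _) ?_
  refine le_trans (Finset.sum_le_sum (g := fun i => m i) fun i _ =>
    (Polynomial.natDegree_pow_le).trans (by
      simpa using mul_le_mul_of_nonneg_left (my_natDegree_lin (ξ i) (v i)) (Nat.zero_le (m i)))) ?_
  simp [Finsupp.degree_apply]

lemma my_key_deg (n : ℕ) (ξ v : Fin n → ℂ) (P : MvPolynomial (Fin n) ℂ) :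
    ((MvPolynomial.aeval (fun i => Polynomial.C (ξ i) + Polynomial.C (v i) * Polynomial.X))
      P).natDegree ≤ P.totalDegree := by
  conv_lhs => rw [MvPolynomial.as_sum P]
  rw [map_sum]
  refine Polynomial.natDegree_sum_le_of_forall_le _ _ fun m hm => ?_
  exact (my_natDegree_term n ξ v m _).trans
    (le_trans (le_of_eq rfl) (MvPolynomial.le_totalDegree hm))

lemma my_key_coeff (n : ℕ) (ξ v : Fin n → ℂ) (P : MvPolynomial (Fin n) ℂ) :
    ((MvPolynomial.aeval (fun i => Polynomial.C (ξ i) + Polynomial.C (v i) * Polynomial.X))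
      P).coeff P.totalDegree
    = MvPolynomial.eval v (MvPolynomial.homogeneousComponent P.totalDegree P) := by
  set d := P.totalDegree with hd
  conv_lhs => rw [MvPolynomial.as_sum P]
  rw [map_sum, Polynomial.finset_sum_coeff, MvPolynomial.homogeneousComponent_apply, map_sum,
    Finset.sum_filter]
  refine Finset.sum_congr rfl fun m hm => ?_
  have hmd : m.degree ≤ d := MvPolynomial.le_totalDegree hm
  by_cases h : m.degree = d
  · rw [if_pos h, MvPolynomial.eval_monomial, MvPolynomial.aeval_monomial,
      Polynomial.algebraMap_eq, Polynomial.coeff_C_mul]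
    congr 1
    have hds : d = ∑ i ∈ m.support, m i := by rw [← h]; rfl
    have hco : ∀ i : Fin n, ((Polynomial.C (ξ i) + Polynomial.C (v i) * Polynomial.X) ^ (m i)).coeff (m i) = v i ^ m i := by
      intro i
      have := Polynomial.coeff_pow_of_natDegree_le (p := Polynomial.C (ξ i) + Polynomial.C (v i) * Polynomial.X)
        (n := 1) (m := m i) (my_natDegree_lin _ _)
      simpa using this
    rw [Finsupp.prod, hds, my_coeff_prod_sum _ _ _ (fun i _ =>
      (Polynomial.natDegree_pow_le).trans (by
        simpa using mul_le_mul_of_nonneg_left (my_natDegree_lin (ξ i) (v i)) (Nat.zero_le (m i))))]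
    rw [Finsupp.prod]
    exact Finset.prod_congr rfl fun i _ => hco i
  · rw [if_neg h]
    exact Polynomial.coeff_eq_zero_of_natDegree_lt
      (lt_of_le_of_lt (my_natDegree_term n ξ v m _) (lt_of_le_of_ne hmd h))

lemma my_round_unique (x : ℝ) (k : ℤ) (h : |x - k| < 1/2) : round x = k := by
  by_contra hne
  have h1 : (1:ℝ) ≤ |(round x : ℝ) - k| := by
    have : (1:ℤ) ≤ |round x - k| := Int.one_le_abs (sub_ne_zero.2 hne)
    calc (1:ℝ) = ((1:ℤ):ℝ) := by norm_num
    _ ≤ ((|round x - k| : ℤ) : ℝ) := by exact_mod_cast this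
    _ = |(round x : ℝ) - k| := by push_cast; ring_nf
  have h2 := abs_sub_round x
  have : |(round x : ℝ) - k| ≤ |(round x:ℝ) - x| + |x - k| := abs_sub_le _ _ _
  rw [abs_sub_comm (round x : ℝ) x] at this
  linarith

lemma my_pigeonhole (d : ℕ) (R : Multiset ℂ) (hcard : Multiset.card R ≤ d) :
    ∃ k : ℕ, k ≤ d ∧ ∀ r ∈ R, (1:ℝ)/2 ≤ ‖(k:ℂ) - r‖ := by
  by_contra hcon
  push_neg at hcon
  set I : Finset ℤ := R.toFinset.image (fun r => round r.re) with hI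
  have hmem : ∀ k ∈ Finset.range (d+1), ((k:ℤ)) ∈ I := by
    intro k hk
    obtain ⟨r, hr, habs⟩ := hcon k (Nat.lt_succ_iff.mp (Finset.mem_range.mp hk))
    have hre : |(k:ℝ) - r.re| < 1/2 := by
      refine lt_of_le_of_lt ?_ habs
      have : ((k:ℂ) - r).re = (k:ℝ) - r.re := by simp
      rw [← this]
      exact Complex.abs_re_le_norm _
    have : round r.re = (k:ℤ) := my_round_unique r.re k (by rwa [abs_sub_comm])
    exact Finset.mem_image.mpr ⟨r, Multiset.mem_toFinset.mpr hr, this⟩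
  have h1 : (Finset.range (d+1)).card ≤ I.card :=
    Finset.card_le_card_of_injOn (fun k => (k:ℤ)) hmem
      (fun a _ b _ hab => by simpa using hab)
  have h2 : I.card ≤ d :=
    le_trans (Finset.card_image_le) (le_trans (R.toFinset_card_le) hcard)
  simp only [Finset.card_range] at h1
  omega

lemma my_prod_bound (t : ℂ) (R : Multiset ℂ) (h : ∀ r ∈ R, (1:ℝ)/2 ≤ ‖t - r‖) :
    ((1:ℝ)/2) ^ (Multiset.card R) ≤ (R.map fun r => ‖t - r‖).prod := by
  induction R using Multiset.induction_on with
  | empty => simp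
  | cons a s ih =>
    rw [Multiset.map_cons, Multiset.prod_cons, Multiset.card_cons, pow_succ, mul_comm]
    exact mul_le_mul (h a (Multiset.mem_cons_self a s))
      (ih fun r hr => h r (Multiset.mem_cons_of_mem hr))
      (pow_nonneg (by norm_num) _) (norm_nonneg _)

lemma my_eval_line (n : ℕ) (ξ v : Fin n → ℂ) (P : MvPolynomial (Fin n) ℂ) (t : ℂ) :
    ((MvPolynomial.aeval (fun i => Polynomial.C (ξ i) + Polynomial.C (v i) * Polynomial.X))
      P).eval t = MvPolynomial.eval (fun i => ξ i + v i * t) P := by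
  induction P using MvPolynomial.induction_on with
  | C a => simp
  | add p q hp hq => simp [hp, hq]
  | mul_X p i hp => simp [hp]

/-- A nonzero polynomial `P` in `n` complex variables is slowly decreasing
in the sense of Ehrenpreis: there is `A > 0` such that for every `ξ ∈ ℝⁿ` there is a point
`ζ ∈ ℂⁿ` with `‖ζ - ξ‖ < A log(2 + ‖ξ‖)` (`ξ` viewed in `ℂⁿ` via the standard inclusion)
and `|P(ζ)| > (A + ‖ξ‖)^{-A}`. -/
theorem stmt10 (n : ℕ) (hn : 1 ≤ n) (P : MvPolynomial (Fin n) ℂ) (hP : P ≠ 0) :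
    ∃ A > (0 : ℝ), ∀ ξ : EuclideanSpace ℝ (Fin n),
      ∃ ζ : EuclideanSpace ℂ (Fin n),
        ‖ζ - (WithLp.equiv 2 (Fin n → ℂ)).symm (fun i => (ξ i : ℂ))‖ <
            A * Real.log (2 + ‖ξ‖) ∧
        (A + ‖ξ‖) ^ (-A) < ‖MvPolynomial.eval (fun i => ζ i) P‖ := by
  classical
  set d := P.totalDegree with hd
  have hsupp : P.support.Nonempty := MvPolynomial.support_nonempty.mpr hP
  obtain ⟨m0, hm0, hm0d⟩ := Finset.exists_mem_eq_sup P.support hsupp (fun s => s.sum fun _ e => e)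
  have hhc : MvPolynomial.homogeneousComponent d P ≠ 0 := by
    intro h0
    have hcf := MvPolynomial.coeff_homogeneousComponent (σ := Fin n) (R := ℂ) d P m0
    rw [h0] at hcf
    have hm0deg : m0.degree = d := by
      rw [hd, MvPolynomial.totalDegree, hm0d]; rfl
    rw [if_pos hm0deg] at hcf
    exact (MvPolynomial.mem_support_iff.mp hm0) (by simpa using hcf.symm)
  obtain ⟨v, hv⟩ : ∃ v : Fin n → ℂ,
      MvPolynomial.eval v (MvPolynomial.homogeneousComponent d P) ≠ 0 := by
    by_contra hcon
    push_neg at hcon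
    exact hhc (MvPolynomial.funext fun x => by simpa using hcon x)
  set c := MvPolynomial.eval v (MvPolynomial.homogeneousComponent d P) with hc
  set ε := ‖c‖ * (1/2)^d with hε
  have hεpos : 0 < ε := mul_pos (norm_pos_iff.mpr hv) (by positivity)
  set vE : EuclideanSpace ℂ (Fin n) := (WithLp.equiv 2 (Fin n → ℂ)).symm v with hvE
  set M := ‖vE‖ with hMdef
  have hM : 0 ≤ M := norm_nonneg _
  set A := max (max 2 (2/ε)) ((d * M + 1)/Real.log 2) with hA
  have hA2 : (2:ℝ) ≤ A := le_trans (le_max_left _ _) (le_max_left _ _)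
  have hApos : 0 < A := by linarith
  refine ⟨A, hApos, fun ξ => ?_⟩
  set ξC : Fin n → ℂ := fun i => ((ξ i : ℝ) : ℂ) with hξC
  set q := (MvPolynomial.aeval
    (fun i => Polynomial.C (ξC i) + Polynomial.C (v i) * Polynomial.X)) P with hq
  have hqc : q.coeff d = c := my_key_coeff n ξC v P
  have hqd : q.natDegree ≤ d := my_key_deg n ξC v P
  have hcne : c ≠ 0 := hv
  have hqdeg : q.natDegree = d :=
    le_antisymm hqd (Polynomial.le_natDegree_of_ne_zero (by rw [hqc]; exact hcne))
  have hsplits : q.Splits := IsAlgClosed.splits q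
  have hroots : Multiset.card q.roots = d := by
    rw [← hqdeg]
    exact Polynomial.splits_iff_card_roots.mp hsplits
  obtain ⟨k, hkd, hk⟩ := my_pigeonhole d q.roots (le_of_eq hroots)
  set ζf : Fin n → ℂ := fun i => ξC i + v i * (k:ℂ) with hζf
  refine ⟨(WithLp.equiv 2 (Fin n → ℂ)).symm ζf, ?_, ?_⟩
  · have hdiff : (WithLp.equiv 2 (Fin n → ℂ)).symm ζf -
        (WithLp.equiv 2 (Fin n → ℂ)).symm (fun i => ((ξ i : ℝ) : ℂ)) = ((k:ℂ)) • vE := by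
      ext i
      simp [hζf, hvE, hξC, mul_comm]
    rw [hdiff, norm_smul]
    have hnk : ‖((k:ℕ):ℂ)‖ = (k:ℝ) := by
      rw [Complex.norm_natCast]
    rw [hnk]
    have hkM : (k:ℝ) * M ≤ d * M :=
      mul_le_mul_of_nonneg_right (by exact_mod_cast hkd) hM
    have hlog2pos : 0 < Real.log 2 := Real.log_pos (by norm_num)
    have h1 : d * M + 1 ≤ A * Real.log 2 := by
      have hle : (d * M + 1)/Real.log 2 ≤ A := le_max_right _ _
      calc d * M + 1 = ((d * M + 1)/Real.log 2) * Real.log 2 := by field_simp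
        _ ≤ A * Real.log 2 := mul_le_mul_of_nonneg_right hle hlog2pos.le
    have hlog : Real.log 2 ≤ Real.log (2 + ‖ξ‖) :=
      Real.log_le_log (by norm_num) (by linarith [norm_nonneg ξ])
    calc (k:ℝ) * M ≤ d * M := hkM
      _ < d * M + 1 := by linarith
      _ ≤ A * Real.log 2 := h1
      _ ≤ A * Real.log (2 + ‖ξ‖) := mul_le_mul_of_nonneg_left hlog hApos.le
  · have heval : MvPolynomial.eval
        (fun i => ((WithLp.equiv 2 (Fin n → ℂ)).symm ζf) i) P = q.eval ((k:ℕ):ℂ) := by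
      rw [hq, my_eval_line]
      congr 1
    have habs : ε ≤ ‖q.eval ((k:ℕ):ℂ)‖ := by
      rw [hsplits.eval_eq_prod_roots, norm_mul]
      have hlead : ‖q.leadingCoeff‖ = ‖c‖ := by
        rw [Polynomial.leadingCoeff, hqdeg, hqc]
      rw [hlead]
      have h2 : ((1:ℝ)/2)^d ≤ ‖(q.roots.map fun a => ((k:ℕ):ℂ) - a).prod‖ := by
        rw [show ‖(q.roots.map fun a => ((k:ℕ):ℂ) - a).prod‖ = ((q.roots.map fun a => ((k:ℕ):ℂ) - a).map (normHom : ℂ →*₀ ℝ)).prod from map_multiset_prod (normHom : ℂ →*₀ ℝ) _, Multiset.map_map]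
        rw [← hroots]
        exact my_prod_bound _ _ hk
      calc ε = ‖c‖ * (1/2)^d := rfl
        _ ≤ ‖c‖ * ‖(q.roots.map fun a => ((k:ℕ):ℂ) - a).prod‖ :=
          mul_le_mul_of_nonneg_left h2 (norm_nonneg _)
    rw [heval]
    have hb1 : (A + ‖ξ‖) ^ (-A) ≤ A ^ (-A) := by
      rw [Real.rpow_neg (by positivity), Real.rpow_neg hApos.le]
      exact inv_anti₀ (Real.rpow_pos_of_pos hApos A)
        (Real.rpow_le_rpow hApos.le (by linarith [norm_nonneg ξ]) hApos.le)
    have hb2 : A ^ (-A) ≤ A ^ (-1:ℝ) :=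
      Real.rpow_le_rpow_of_exponent_le (by linarith) (by linarith)
    have hb3 : A ^ (-1:ℝ) = A⁻¹ := Real.rpow_neg_one A
    have hb4 : A⁻¹ ≤ ε/2 := by
      have h2ε : 2/ε ≤ A := le_trans (le_max_right _ _) (le_max_left _ _)
      calc A⁻¹ ≤ (2/ε)⁻¹ := inv_anti₀ (by positivity) h2ε
        _ = ε/2 := by rw [inv_div]
    linarith
end
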